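/- For every integer p ≥ 3, the graph that is the complement of K_2 + C_{p+2} (the disjoint union of an edge and a cycle of length p+2) has order p+4, has (p+2)(p+3)/2 edges, and does not contain the book B_p as a subgraph. -/

import Mathlib

open SimpleGraph
open scoped Fin.NatCast Fin.CommRing

/-- A graph contains the book `B_p` iff some edge has at least `p` common neighbors. -/
def SimpleGraph.ContainsBook {V : Type*} (G : SimpleGraph V) (p : ℕ) : Prop :=
  ∃ x y, G.Adj x y ∧ p ≤ (G.commonNeighbors x y).ncard

/-- The Turán number `ex(n, B_p)`: the maximum number of edges of a simple graph
on `n` vertices containing no book `B_p`. -/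
noncomputable def bookTuranNumber (n p : ℕ) : ℕ :=
  sSup {e : ℕ | ∃ G : SimpleGraph (Fin n), ¬ G.ContainsBook p ∧ G.edgeSet.ncard = e}

/-- The disjoint union of `m` copies of the complete graph `K_k`. -/
def unionComplete (m k : ℕ) : SimpleGraph (Fin m × Fin k) :=
  SimpleGraph.fromRel fun a b => a.1 = b.1

/-- The join `G ∨ H` of two graphs. -/
def SimpleGraph.join {α β : Type*} (G : SimpleGraph α) (H : SimpleGraph β) :
    SimpleGraph (α ⊕ β) := (Gᶜ ⊕g Hᶜ)ᶜ

/-- A disjoint union of cycles `C_{i 0} + ⋯ + C_{i (t-1)}`. -/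
def cycleFamily (t : ℕ) (i : Fin t → ℕ) : SimpleGraph (Σ j : Fin t, Fin (i j)) :=
  SimpleGraph.fromRel fun a b => ∃ h : a.1 = b.1, (SimpleGraph.cycleGraph (i b.1)).Adj (h ▸ a.2) b.2

/-! ### Auxiliary lemmas -/

private lemma auxNe (p c : ℕ) (hc1 : 0 < c) (hc2 : c < p + 2) : ((c : ℕ) : Fin (p+2)) ≠ 0 := by
  intro h
  have := congrArg Fin.val h
  rw [Fin.val_cast_of_lt hc2] at this
  simp at this
  omega

private lemma aux1 (p : ℕ) : (1 : Fin (p+2)) ≠ 0 := by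
  have : ((1 : ℕ) : Fin (p+2)) ≠ 0 := auxNe p 1 (by omega) (by omega)
  simpa using this

private lemma aux2 (p : ℕ) (hp : 3 ≤ p) : (2 : Fin (p+2)) ≠ 0 := by
  have : ((2 : ℕ) : Fin (p+2)) ≠ 0 := auxNe p 2 (by omega) (by omega)
  simpa using this

private lemma aux4 (p : ℕ) (hp : 3 ≤ p) : (4 : Fin (p+2)) ≠ 0 := by
  have : ((4 : ℕ) : Fin (p+2)) ≠ 0 := auxNe p 4 (by omega) (by omega)
  simpa using this

private lemma sub_one_ne_self' (p : ℕ) (x : Fin (p+2)) : x - 1 ≠ x := by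
  intro h
  have h2 : x - (x - 1) = 0 := sub_eq_zero_of_eq h.symm
  rw [show x - (x - 1) = 1 from by ring] at h2
  exact aux1 p h2

private lemma add_one_ne_self' (p : ℕ) (x : Fin (p+2)) : x + 1 ≠ x := by
  intro h
  have h2 : (x + 1) - x = 0 := sub_eq_zero_of_eq h
  rw [show (x + 1) - x = 1 from by ring] at h2
  exact aux1 p h2

private lemma sub_one_ne_add_one' (p : ℕ) (hp : 3 ≤ p) (x : Fin (p+2)) : x - 1 ≠ x + 1 := by
  intro h
  have h2 : (x + 1) - (x - 1) = 0 := sub_eq_zero_of_eq h.symm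
  rw [show (x + 1) - (x - 1) = 2 from by ring] at h2
  exact aux2 p hp h2

/-- The neighborSet of `inl a` in a sum graph. -/
private lemma nsl {α β : Type*} (G : SimpleGraph α) (H : SimpleGraph β) (a : α) :
    (G ⊕g H).neighborSet (Sum.inl a) = Sum.inl '' (G.neighborSet a) := by
  ext z
  cases z with
  | inl b => simp [mem_neighborSet, sum_adj]
  | inr b => simp [mem_neighborSet, sum_adj]

private lemma nsr {α β : Type*} (G : SimpleGraph α) (H : SimpleGraph β) (b : β) :
    (G ⊕g H).neighborSet (Sum.inr b) = Sum.inr '' (H.neighborSet b) := by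
  ext z
  cases z with
  | inl c => simp [mem_neighborSet, sum_adj]
  | inr c => simp [mem_neighborSet, sum_adj]

private lemma ncard_ns {V : Type*} [Fintype V] (G : SimpleGraph V) [DecidableRel G.Adj] (v : V) :
    (G.neighborSet v).ncard = G.degree v := by
  rw [Set.ncard_eq_toFinset_card', Set.toFinset_card, card_neighborSet_eq_degree]

/-- The mixed-case bound for the book-freeness proof. -/
private lemma mixed_bound (p : ℕ) (hp : 3 ≤ p) (a : Fin 2) (v : Fin (p+2)) :
    (((completeGraph (Fin 2) ⊕g SimpleGraph.cycleGraph (p + 2))ᶜ).commonNeighbors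
      (Sum.inl a) (Sum.inr v)).ncard ≤ p - 1 := by
  classical
  set G2 := completeGraph (Fin 2) ⊕g SimpleGraph.cycleGraph (p + 2) with hG2
  set E : Finset (Fin (p+2)) := {v, v - 1, v + 1} with hE
  have hEcard : E.card = 3 := by
    rw [hE, Finset.card_insert_of_notMem, Finset.card_insert_of_notMem, Finset.card_singleton]
    · simp only [Finset.mem_singleton]
      exact sub_one_ne_add_one' p hp v
    · simp only [Finset.mem_insert, Finset.mem_singleton]
      push_neg
      exact ⟨(sub_one_ne_self' p v).symm, (add_one_ne_self' p v).symm⟩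
  have hsub : (G2ᶜ.commonNeighbors (Sum.inl a) (Sum.inr v)) ⊆
      Sum.inr '' ((Eᶜ : Finset (Fin (p+2))) : Set (Fin (p+2))) := by
    intro z hz
    rw [mem_commonNeighbors] at hz
    obtain ⟨h1, h2⟩ := hz
    cases z with
    | inl b =>
      rw [compl_adj] at h1
      exact absurd (show G2.Adj (Sum.inl a) (Sum.inl b) by
        simp only [hG2, sum_adj, completeGraph, top_adj]
        intro h; exact h1.1 (by rw [h])) h1.2
    | inr t =>
      rw [compl_adj] at h2
      refine ⟨t, ?_, rfl⟩
      simp only [Finset.coe_compl, Set.mem_compl_iff, Finset.mem_coe, hE, Finset.mem_insert,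
        Finset.mem_singleton]
      push_neg
      have hnadj : ¬ (SimpleGraph.cycleGraph (p+2)).Adj v t := by
        intro h; exact h2.2 (by simpa [hG2, sum_adj] using h)
      rw [cycleGraph_adj] at hnadj
      push_neg at hnadj
      refine ⟨fun h => h2.1 (by rw [h]), fun h => hnadj.1 ?_, fun h => hnadj.2 ?_⟩
      · rw [h]; ring
      · rw [h]; ring
  calc (G2ᶜ.commonNeighbors (Sum.inl a) (Sum.inr v)).ncard
      ≤ (Sum.inr '' ((Eᶜ : Finset (Fin (p+2))) : Set (Fin (p+2))) :
          Set (Fin 2 ⊕ Fin (p+2))).ncard :=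
        Set.ncard_le_ncard hsub (Set.toFinite _)
    _ = (Eᶜ : Finset (Fin (p+2))).card := by
        rw [Set.ncard_image_of_injective _ Sum.inr_injective, Set.ncard_coe_finset]
    _ = p - 1 := by rw [Finset.card_compl, hEcard, Fintype.card_fin]; omega

/-- The inr-inr-case bound. -/
private lemma inr_bound (p : ℕ) (hp : 3 ≤ p) (u v : Fin (p+2)) (huv : u ≠ v)
    (hna : ¬ (SimpleGraph.cycleGraph (p+2)).Adj u v) :
    (((completeGraph (Fin 2) ⊕g SimpleGraph.cycleGraph (p + 2))ᶜ).commonNeighbors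
      (Sum.inr u) (Sum.inr v)).ncard ≤ p - 1 := by
  classical
  set G2 := completeGraph (Fin 2) ⊕g SimpleGraph.cycleGraph (p + 2) with hG2
  rw [cycleGraph_adj] at hna
  push_neg at hna
  obtain ⟨hna1, hna2⟩ := hna
  -- choose w ∈ {v-1, v+1} avoiding {u-1, u+1}
  obtain ⟨w, hw0, hw2, hw3⟩ : ∃ w : Fin (p+2), (w = v - 1 ∨ w = v + 1) ∧ w ≠ u - 1 ∧ w ≠ u + 1 := by
    by_cases hc : v - 1 = u + 1
    · refine ⟨v + 1, Or.inr rfl, ?_, ?_⟩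
      · intro h
        have hu : u = v - 2 := by
          have : u + 1 - 1 = v - 1 - 1 := by rw [hc]
          rw [show u + 1 - 1 = u from by ring, show v - 1 - 1 = v - 2 from by ring] at this
          exact this
        rw [hu] at h
        have h2 : (v + 1) - (v - 2 - 1) = 0 := sub_eq_zero_of_eq (by rw [h])
        rw [show (v + 1) - (v - 2 - 1) = 4 from by ring] at h2
        exact aux4 p hp h2
      · intro h
        exact huv (by
          have := sub_eq_zero_of_eq h
          rw [show (v + 1) - (u + 1) = v - u from by ring] at this
          exact (sub_eq_zero.mp this).symm)
    · refine ⟨v - 1, Or.inl rfl, ?_, hc⟩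
      intro h
      apply huv
      have := sub_eq_zero_of_eq h
      rw [show (v - 1) - (u - 1) = v - u from by ring] at this
      exact (sub_eq_zero.mp this).symm
  have hwu : w ≠ u := by
    rcases hw0 with rfl | rfl
    · intro h
      exact hna2 (by rw [← h]; ring)
    · intro h
      exact hna1 (by rw [← h]; ring)
  have hwv : w ≠ v := by
    rcases hw0 with rfl | rfl
    · exact sub_one_ne_self' p v
    · exact add_one_ne_self' p v
  have hvu1 : v ≠ u - 1 := by
    intro h; exact hna1 (by rw [h]; ring)
  have hvu2 : v ≠ u + 1 := by
    intro h; exact hna2 (by rw [h]; ring)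
  set E : Finset (Fin (p+2)) := {u, v, u - 1, u + 1, w} with hE
  have hEcard : E.card = 5 := by
    rw [hE, Finset.card_insert_of_notMem, Finset.card_insert_of_notMem,
      Finset.card_insert_of_notMem, Finset.card_insert_of_notMem, Finset.card_singleton]
    · simp only [Finset.mem_singleton]
      exact fun h => hw3 h.symm
    · simp only [Finset.mem_insert, Finset.mem_singleton]
      push_neg
      exact ⟨sub_one_ne_add_one' p hp u, fun h => hw2 h.symm⟩
    · simp only [Finset.mem_insert, Finset.mem_singleton]
      push_neg
      exact ⟨hvu1, hvu2, fun h => hwv h.symm⟩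
    · simp only [Finset.mem_insert, Finset.mem_singleton]
      push_neg
      exact ⟨huv, fun h => (sub_one_ne_self' p u) h.symm, fun h => (add_one_ne_self' p u) h.symm,
        fun h => hwu h.symm⟩
  have hsub : (G2ᶜ.commonNeighbors (Sum.inr u) (Sum.inr v)) ⊆
      Sum.inr '' ((Eᶜ : Finset (Fin (p+2))) : Set (Fin (p+2))) ∪
        Sum.inl '' (Set.univ : Set (Fin 2)) := by
    intro z hz
    rw [mem_commonNeighbors] at hz
    obtain ⟨h1, h2⟩ := hz
    cases z with
    | inl b => exact Or.inr ⟨b, Set.mem_univ b, rfl⟩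
    | inr t =>
      rw [compl_adj] at h1 h2
      refine Or.inl ⟨t, ?_, rfl⟩
      simp only [Finset.coe_compl, Set.mem_compl_iff, Finset.mem_coe, hE, Finset.mem_insert,
        Finset.mem_singleton]
      push_neg
      have hnadj1 : ¬ (SimpleGraph.cycleGraph (p+2)).Adj u t := by
        intro h; exact h1.2 (by simpa [hG2, sum_adj] using h)
      have hnadj2 : ¬ (SimpleGraph.cycleGraph (p+2)).Adj v t := by
        intro h; exact h2.2 (by simpa [hG2, sum_adj] using h)
      rw [cycleGraph_adj] at hnadj1 hnadj2
      push_neg at hnadj1 hnadj2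
      refine ⟨fun h => h1.1 (by rw [h]), fun h => h2.1 (by rw [h]),
        fun h => hnadj1.1 (by rw [h]; ring), fun h => hnadj1.2 (by rw [h]; ring), ?_⟩
      rcases hw0 with rfl | rfl
      · exact fun h => hnadj2.1 (by rw [h]; ring)
      · exact fun h => hnadj2.2 (by rw [h]; ring)
  calc (G2ᶜ.commonNeighbors (Sum.inr u) (Sum.inr v)).ncard
      ≤ (Sum.inr '' ((Eᶜ : Finset (Fin (p+2))) : Set (Fin (p+2))) ∪
          Sum.inl '' (Set.univ : Set (Fin 2)) : Set (Fin 2 ⊕ Fin (p+2))).ncard :=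
        Set.ncard_le_ncard hsub (Set.toFinite _)
    _ ≤ (Sum.inr '' ((Eᶜ : Finset (Fin (p+2))) : Set (Fin (p+2))) :
          Set (Fin 2 ⊕ Fin (p+2))).ncard +
        (Sum.inl '' (Set.univ : Set (Fin 2)) : Set (Fin 2 ⊕ Fin (p+2))).ncard :=
        Set.ncard_union_le _ _
    _ = (Eᶜ : Finset (Fin (p+2))).card + 2 := by
        rw [Set.ncard_image_of_injective _ Sum.inr_injective, Set.ncard_coe_finset,
          Set.ncard_image_of_injective _ Sum.inl_injective, Set.ncard_univ]
        simp [Nat.card_eq_fintype_card]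
    _ = p - 1 := by rw [Finset.card_compl, hEcard, Fintype.card_fin]; omega

theorem stmt12 (p : ℕ) (hp : 3 ≤ p) :
    Fintype.card (Fin 2 ⊕ Fin (p + 2)) = p + 4 ∧
    ((completeGraph (Fin 2) ⊕g SimpleGraph.cycleGraph (p + 2))ᶜ).edgeSet.ncard
      = (p + 2) * (p + 3) / 2 ∧
    ¬ ((completeGraph (Fin 2) ⊕g SimpleGraph.cycleGraph (p + 2))ᶜ).ContainsBook p := by
  classical
  set G2 := completeGraph (Fin 2) ⊕g SimpleGraph.cycleGraph (p + 2) with hG2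
  have hcardV : Fintype.card (Fin 2 ⊕ Fin (p + 2)) = p + 4 := by
    rw [Fintype.card_sum, Fintype.card_fin, Fintype.card_fin]; omega
  refine ⟨hcardV, ?_, ?_⟩
  · -- edge count
    -- degrees in G2
    have dinl : ∀ a : Fin 2, G2.degree (Sum.inl a) = 1 := by
      intro a
      rw [← card_neighborSet_eq_degree, ← Nat.card_eq_fintype_card, Nat.card_coe_set_eq, hG2, nsl]
      rw [Set.ncard_image_of_injective _ Sum.inl_injective]
      have : (completeGraph (Fin 2)).neighborSet a = {a}ᶜ := by
        ext b; simp [mem_neighborSet, completeGraph, eq_comm]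
      rw [this]
      have h1 : ({a} : Set (Fin 2)).ncard + ({a}ᶜ : Set (Fin 2)).ncard = Nat.card (Fin 2) :=
        Set.ncard_add_ncard_compl _
      simp only [Set.ncard_singleton, Nat.card_eq_fintype_card, Fintype.card_fin] at h1
      omega
    have dinr : ∀ b : Fin (p+2), G2.degree (Sum.inr b) = 2 := by
      intro b
      rw [← card_neighborSet_eq_degree, ← Nat.card_eq_fintype_card, Nat.card_coe_set_eq, hG2, nsr]
      rw [Set.ncard_image_of_injective _ Sum.inr_injective]
      rw [cycleGraph_neighborSet]
      exact Set.ncard_pair (sub_one_ne_add_one' p hp b)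
    have hhs : ∑ v : Fin 2 ⊕ Fin (p+2), G2.degree v = 2 * G2.edgeFinset.card :=
      by convert sum_degrees_eq_twice_card_edges G2
    rw [Fintype.sum_sum_type] at hhs
    simp only [dinl, dinr, Finset.sum_const, Finset.card_univ, Fintype.card_fin, smul_eq_mul] at hhs
    have hG2card : G2.edgeFinset.card = p + 3 := by omega
    -- top graph edge count
    have hsup : G2 ⊔ G2ᶜ = ⊤ := sup_compl_eq_top
    have hncard : ∀ (H : SimpleGraph (Fin 2 ⊕ Fin (p+2))) [DecidableRel H.Adj],
        H.edgeSet.ncard = H.edgeFinset.card := by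
      intro H _
      rw [← coe_edgeFinset, Set.ncard_coe_finset]
    have htop : (⊤ : SimpleGraph (Fin 2 ⊕ Fin (p+2))).edgeSet.ncard = (p + 4).choose 2 := by
      rw [hncard, card_edgeFinset_top_eq_card_choose_two, hcardV]
    have hsplit : (⊤ : SimpleGraph (Fin 2 ⊕ Fin (p+2))).edgeSet.ncard
        = G2.edgeSet.ncard + G2ᶜ.edgeSet.ncard := by
      rw [← hsup, edgeSet_sup, Set.ncard_union_eq (disjoint_edgeSet.mpr disjoint_compl_right)
        (Set.toFinite _) (Set.toFinite _)]
    obtain ⟨k, hk⟩ : ∃ k, (p + 2) * (p + 3) = 2 * k := by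
      obtain ⟨k, hk⟩ := Nat.even_mul_succ_self (p + 2)
      refine ⟨k, ?_⟩
      have h6 : (p + 2) * (p + 2 + 1) = (p + 2) * (p + 3) := by ring
      omega
    have e2 : (p + 4) * (p + 3) = 2 * k + 2 * (p + 3) := by
      have h5 : (p + 4) * (p + 3) = (p + 2) * (p + 3) + 2 * (p + 3) := by ring
      rw [h5, hk]
    have hchoose : (p + 4).choose 2 = k + (p + 3) := by
      rw [Nat.choose_two_right, show p + 4 - 1 = p + 3 from by omega, e2]
      omega
    have hg2n : G2.edgeSet.ncard = p + 3 := by rw [hncard, hG2card]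
    rw [hk]
    omega
  · -- book-free
    rintro ⟨x, y, hadj, hcard⟩
    cases x with
    | inl a =>
      cases y with
      | inl b =>
        rw [compl_adj] at hadj
        exact hadj.2 (by
          simp only [hG2, sum_adj, completeGraph, top_adj]
          intro h; exact hadj.1 (by rw [h]))
      | inr v =>
        have := mixed_bound p hp a v
        rw [← hG2] at this
        omega
    | inr u =>
      cases y with
      | inl a =>
        rw [commonNeighbors_symm] at hcard
        have := mixed_bound p hp a u
        rw [← hG2] at this
        omega
      | inr v =>
        rw [compl_adj] at hadj
        have huv : u ≠ v := fun h => hadj.1 (by rw [h])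
        have hna : ¬ (SimpleGraph.cycleGraph (p+2)).Adj u v := by
          intro h; exact hadj.2 (by simpa [hG2, sum_adj] using h)
        have := inr_bound p hp u v huv hna
        rw [← hG2] at this
        omega
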